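/- Let t ≥ 2, let G be a t-uniform hypergraph on vertex set V, and let E₀ be a subset of the edges of G; let H' be the t-uniform hypergraph whose edges are, for each e ∈ E₀, the set of all (t−1)-element subsets of e. Set t' = t/2 + 2√(t·ln t) and δ = √(4·ln t/(t−1)). Let S be a set of (t−1)-element subsets of V such that every edge of H' contains at least t' elements of S. Let c : V → {0,1} be any 2-coloring, let S' = { v ∈ S : some color i ∈ {0,1} satisfies |{u ∈ v : c(u) = i}| ≤ (1−δ)(t−1)/2 }, and for v ∈ S define f(v) = |{u ∈ v : c(u) = 1}| mod 2. Then for every p ∈ {0,1}, the set S' ∪ { v ∈ S : f(v) = p } is a vertex cover of H'. -/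

import Mathlib

open Finset

lemma zmod2_neg (a : ZMod 2) : -a = a := by revert a; decide

lemma zmod2_one_add_ne (a : ZMod 2) : 1 + a ≠ a := by revert a; decide

lemma zmod2_ne (a b : ZMod 2) (h : a ≠ b) : a = b + 1 := by revert h; revert a b; decide

lemma stmt8_aux_ineq (t : ℝ) (ht : 2 ≤ t) :
    t - (t/2 + 2 * Real.sqrt (t * Real.log t))
      ≤ (1 - Real.sqrt (4 * Real.log t / (t-1))) * (t-1) / 2 := by
  set L := Real.log t with hLdef
  have hL : 0 < L := Real.log_pos (by linarith)
  have ht1 : (0:ℝ) < t - 1 := by linarith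
  have h1 : Real.sqrt (4*L/(t-1)) * (t-1) ≤ 2 * Real.sqrt (t*L) := by
    have e1 : Real.sqrt (4*L/(t-1)) * (t-1) = Real.sqrt (4*L*(t-1)) := by
      rw [← Real.sqrt_sq ht1.le, ← Real.sqrt_mul (by positivity)]
      congr 1
      field_simp
      ring_nf
      rw [Real.sq_sqrt (by nlinarith)]
    have e2 : (2:ℝ) * Real.sqrt (t*L) = Real.sqrt (4*(t*L)) := by
      rw [show (4:ℝ)*(t*L) = (2:ℝ)^2 * (t*L) by ring,
        Real.sqrt_mul (by norm_num : (0:ℝ) ≤ (2:ℝ)^2) (t*L),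
        Real.sqrt_sq (by norm_num)]
    rw [e1, e2]
    apply Real.sqrt_le_sqrt
    nlinarith
  have h2 : (1:ℝ)/2 ≤ Real.sqrt (t*L) := by
    rw [show (1:ℝ)/2 = Real.sqrt (1/4) by
      rw [show (1:ℝ)/4 = (1/2)^2 by norm_num, Real.sqrt_sq (by norm_num)]]
    apply Real.sqrt_le_sqrt
    have hlog2 : (0.6931471803 : ℝ) < Real.log 2 := Real.log_two_gt_d9
    have : Real.log 2 ≤ L := Real.log_le_log (by norm_num) ht
    nlinarith
  nlinarith

lemma stmt8_erase_parity (V : Type*) [DecidableEq V] (e : Finset V) (c : V → ZMod 2) :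
    ∀ u ∈ e, (((e.erase u).filter fun v => c v = 1).card : ZMod 2)
      = ((e.filter fun v => c v = 1).card : ZMod 2) + c u := by
  intro u hu
  rw [Finset.filter_erase]
  by_cases hcu : c u = 1
  · have hmem : u ∈ e.filter fun v => c v = 1 := mem_filter.mpr ⟨hu, hcu⟩
    rw [card_erase_of_mem hmem, hcu]
    have h1 : 1 ≤ (e.filter fun v => c v = 1).card := card_pos.mpr ⟨u, hmem⟩
    rw [Nat.cast_sub h1, Nat.cast_one, sub_eq_add_neg,
      (by decide : (-1 : ZMod 2) = 1)]
  · have hcu0 : c u = 0 := by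
      have := zmod2_ne (c u) 1 hcu
      rwa [(by decide : (1:ZMod 2) + 1 = 0)] at this
    rw [erase_eq_of_notMem (by simp [hcu] : u ∉ e.filter fun v => c v = 1),
      hcu0, add_zero]

/-- Let `t ≥ 2`, let `E₀` be a set of `t`-element edges on `V`, and let `H'` have edges
`powersetCard (t-1) e` for `e ∈ E₀`. Set `t' = t/2 + 2√(t ln t)` and
`δ = √(4 ln t/(t-1))`. Suppose `S` is a set of `(t-1)`-element subsets of `V` such that
every edge of `H'` contains at least `t'` elements of `S`. For any 2-coloring
`c : V → {0,1}`, let `S'` be the members of `S` in which some color appears at most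
`(1-δ)(t-1)/2` times, and `f(s) = |{u ∈ s : c u = 1}| mod 2`. Then for every `p`,
`S' ∪ {s ∈ S : f s = p}` is a vertex cover of `H'`. -/
theorem stmt8 (t : ℕ) (ht : 2 ≤ t) (V : Type*) [DecidableEq V]
    (E₀ : Finset (Finset V)) (hunif : ∀ e ∈ E₀, e.card = t)
    (S : Finset (Finset V)) (hS : ∀ s ∈ S, s.card = t - 1)
    (hbig : ∀ e ∈ E₀,
      ((t : ℝ) / 2 + 2 * Real.sqrt ((t : ℝ) * Real.log t))
        ≤ (((e.powersetCard (t - 1)) ∩ S).card : ℝ))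
    (c : V → ZMod 2) (p : ZMod 2) :
    ∀ e ∈ E₀, ∃ s ∈ e.powersetCard (t - 1), s ∈ S ∧
      ((∃ i : ZMod 2, (((s.filter fun u => c u = i).card : ℝ))
          ≤ (1 - Real.sqrt (4 * Real.log t / ((t : ℝ) - 1))) * ((t : ℝ) - 1) / 2) ∨
        (((s.filter fun u => c u = 1).card : ZMod 2) = p)) := by
  intro e he
  have hec : e.card = t := hunif e he
  have htR : (2:ℝ) ≤ (t:ℝ) := by exact_mod_cast ht
  set A := (e.powersetCard (t-1)) ∩ S with hAdef
  have hAcard : ((t : ℝ) / 2 + 2 * Real.sqrt ((t : ℝ) * Real.log t)) ≤ (A.card : ℝ) :=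
    hbig e he
  have hsqrtnn : (0:ℝ) ≤ Real.sqrt ((t : ℝ) * Real.log t) := Real.sqrt_nonneg _
  have hApos : A.Nonempty := by
    rw [← card_pos]
    have h1 : (1:ℝ) ≤ (A.card : ℝ) := by linarith
    exact_mod_cast lt_of_lt_of_le zero_lt_one h1
  -- every member of A is e.erase u for a unique u ∈ e
  have hrep : ∀ s ∈ A, ∃ u ∈ e, s = e.erase u := by
    intro s hs
    have hs' := mem_inter.mp hs
    obtain ⟨hsub, hcard⟩ := mem_powersetCard.mp hs'.1
    have hne : ¬ e ⊆ s := by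
      intro h
      have := card_le_card h
      omega
    obtain ⟨u, hu, hus⟩ := not_subset.mp hne
    refine ⟨u, hu, ?_⟩
    have h1 : s ⊆ e.erase u := subset_erase.mpr ⟨hsub, hus⟩
    have h2 : (e.erase u).card ≤ s.card := by
      rw [card_erase_of_mem hu, hec, hcard]
    exact eq_of_subset_of_card_le h1 h2
  by_cases hcase : ∃ s ∈ A, ((s.filter fun u => c u = 1).card : ZMod 2) = p
  · obtain ⟨s, hsA, hf⟩ := hcase
    have hs' := mem_inter.mp hsA
    exact ⟨s, hs'.1, hs'.2, Or.inr hf⟩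
  · push_neg at hcase
    set k : ZMod 2 := ((e.filter fun v => c v = 1).card : ZMod 2) with hkdef
    set i₀ : ZMod 2 := p + 1 + k with hi₀
    -- all removed vertices have color i₀
    have hcol : ∀ u ∈ e, e.erase u ∈ A → c u = i₀ := by
      intro u hu huA
      have hpar := stmt8_erase_parity V e c u hu
      have hne := hcase _ huA
      have := zmod2_ne _ _ hne
      rw [hpar] at this
      have : c u = p + 1 - k := by
        rw [← this]; ring
      rw [this, hi₀, sub_eq_add_neg, zmod2_neg k]
    -- A injects into the vertices of e with color i₀
    set B := e.filter (fun u => c u = i₀) with hBdef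
    have hAB : A ⊆ B.image (fun u => e.erase u) := by
      intro s hs
      obtain ⟨u, hu, rfl⟩ := hrep s hs
      exact mem_image.mpr ⟨u, mem_filter.mpr ⟨hu, hcol u hu hs⟩, rfl⟩
    have hcardAB : A.card ≤ B.card :=
      le_trans (card_le_card hAB) (card_image_le)
    obtain ⟨s, hsA⟩ := hApos
    have hs' := mem_inter.mp hsA
    refine ⟨s, hs'.1, hs'.2, Or.inl ⟨1 + i₀, ?_⟩⟩
    have hsub : s ⊆ e := (mem_powersetCard.mp hs'.1).1
    -- the vertices of s with color 1 + i₀ are among e \ B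
    have hsubfilt : (s.filter fun u => c u = 1 + i₀) ⊆ e.filter (fun u => ¬ c u = i₀) := by
      intro x hx
      have hx' := mem_filter.mp hx
      refine mem_filter.mpr ⟨hsub hx'.1, ?_⟩
      rw [hx'.2]
      exact zmod2_one_add_ne i₀
    have hcount : (e.filter (fun u => ¬ c u = i₀)).card = t - B.card := by
      have := Finset.card_filter_add_card_filter_not
        (s := e) (p := fun u => c u = i₀)
      rw [hec] at this
      simp only [hBdef]
      omega
    have hBle : B.card ≤ t := by
      calc B.card ≤ e.card := card_filter_le _ _
        _ = t := hec
    have h1 : ((s.filter fun u => c u = 1 + i₀).card : ℝ) ≤ (t : ℝ) - (B.card : ℝ) := by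
      have := card_le_card hsubfilt
      rw [hcount] at this
      have := (Nat.cast_le (α := ℝ)).mpr this
      rwa [Nat.cast_sub hBle] at this
    have h2 : ((t : ℝ) / 2 + 2 * Real.sqrt ((t : ℝ) * Real.log t)) ≤ (B.card : ℝ) := by
      calc ((t : ℝ) / 2 + 2 * Real.sqrt ((t : ℝ) * Real.log t)) ≤ (A.card : ℝ) := hAcard
        _ ≤ (B.card : ℝ) := by exact_mod_cast hcardAB
    have h3 := stmt8_aux_ineq (t : ℝ) htR
    linarith
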